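/- Let λ, ν, μ_1,...,μ_I > 0 with λ Σ 1/μ_i > 1. The system of equations λ − μ_1 z_1/‖z‖_1 − ν z_1 = 0 and μ_{i-1} z_{i-1}/‖z‖_1 − μ_i z_i/‖z‖_1 − ν z_i = 0 for i = 2,...,I has a unique solution z* ∈ (0,∞)^I, given by z_1* = λ‖z*‖_1/(μ_1 + ν‖z*‖_1), z_i* = μ_{i-1} z_{i-1}*/(μ_i + ν‖z*‖_1), where ‖z*‖_1 is the unique positive root of f(x)=1 with f as in the invariant-point equation. -/

import Mathlib

open Set

/-- `f` from the invariant-point equation, with `Fin (n+1)`-indexed rates: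
`f x = λ ∑_{i} (∏_{j<i} μ j) / (∏_{j≤i} (μ j + ν x))`. -/
noncomputable def invariantF (n : ℕ) (lam ν : ℝ) (μ : Fin (n + 1) → ℝ) (x : ℝ) : ℝ :=
  lam * ∑ i : Fin (n + 1),
    (∏ j ∈ Finset.univ.filter (· < i), μ j) /
      ∏ j ∈ Finset.univ.filter (· ≤ i), (μ j + ν * x)

/-- The invariant fluid-model equations `λ − μ_1 z_1/‖z‖ − ν z_1 = 0`,
`μ_{i-1} z_{i-1}/‖z‖ − μ_i z_i/‖z‖ − ν z_i = 0` for `i ≥ 2` (here `0`-based). -/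
def InvariantEqns (n : ℕ) (lam ν : ℝ) (μ : Fin (n + 1) → ℝ) (z : Fin (n + 1) → ℝ) : Prop :=
  lam - μ 0 * z 0 / (∑ j, z j) - ν * z 0 = 0 ∧
  ∀ i : Fin (n + 1), i ≠ 0 →
    μ (i - 1) * z (i - 1) / (∑ j, z j) - μ i * z i / (∑ j, z j) - ν * z i = 0

namespace InvAux

lemma filter_lt_zero (n : ℕ) : (Finset.univ.filter (· < (0 : Fin (n+1)))) = ∅ := by
  ext j; simp

lemma filter_le_zero (n : ℕ) : (Finset.univ.filter (· ≤ (0 : Fin (n+1)))) = {0} := by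
  ext j; simp [Fin.le_zero_iff]

lemma filter_lt_succ {n : ℕ} (k : Fin n) :
    (Finset.univ.filter (· < k.succ)) = insert k.castSucc (Finset.univ.filter (· < k.castSucc)) := by
  ext j; simp only [Finset.mem_filter, Finset.mem_univ, true_and, Finset.mem_insert, Fin.lt_def,
    Fin.ext_iff, Fin.val_succ, Fin.coe_castSucc]; omega

lemma filter_le_succ {n : ℕ} (k : Fin n) :
    (Finset.univ.filter (· ≤ k.succ)) = insert k.succ (Finset.univ.filter (· ≤ k.castSucc)) := by
  ext j; simp only [Finset.mem_filter, Finset.mem_univ, true_and, Finset.mem_insert, Fin.le_def,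
    Fin.ext_iff, Fin.val_succ, Fin.coe_castSucc]; omega

lemma succ_sub_one {n : ℕ} (k : Fin n) : (k.succ : Fin (n+1)) - 1 = k.castSucc := by
  have hk := k.isLt
  rw [Fin.ext_iff, Fin.sub_def]
  simp only [Fin.val_succ, Fin.val_one', Fin.coe_castSucc]
  rw [Nat.mod_eq_of_lt (a := 1) (by omega)]
  have h2 : n + 1 - 1 + (k.val + 1) = k.val + (n+1) := by omega
  rw [h2, Nat.add_mod_right, Nat.mod_eq_of_lt (by omega)]

variable {n : ℕ} (lam ν : ℝ) (μ : Fin (n+1) → ℝ)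

noncomputable def wA (i : Fin (n+1)) : ℝ := ∏ j ∈ Finset.univ.filter (· < i), μ j

noncomputable def wB (x : ℝ) (i : Fin (n+1)) : ℝ :=
  ∏ j ∈ Finset.univ.filter (· ≤ i), (μ j + ν * x)

noncomputable def wZ (x : ℝ) (i : Fin (n+1)) : ℝ := lam * x * wA μ i / wB ν μ x i

variable {lam ν μ}

lemma wA_pos (hμ : ∀ i, 0 < μ i) (i : Fin (n+1)) : 0 < wA μ i :=
  Finset.prod_pos fun j _ => hμ j

lemma wB_pos (hμ : ∀ i, 0 < μ i) {x : ℝ} (hx : 0 ≤ ν * x) (i : Fin (n+1)) : 0 < wB ν μ x i :=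
  Finset.prod_pos fun j _ => by have := hμ j; linarith

lemma wZ_pos (hlam : 0 < lam) (hμ : ∀ i, 0 < μ i) {x : ℝ} (hx : 0 < x) (hνx : 0 ≤ ν * x)
    (i : Fin (n+1)) : 0 < wZ lam ν μ x i :=
  div_pos (mul_pos (mul_pos hlam hx) (wA_pos hμ i)) (wB_pos hμ hνx i)

lemma wA_zero : wA μ 0 = 1 := by rw [wA, filter_lt_zero, Finset.prod_empty]

lemma wB_zero (x : ℝ) : wB ν μ x 0 = μ 0 + ν * x := by
  rw [wB, filter_le_zero, Finset.prod_singleton]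

lemma wA_succ (k : Fin n) : wA μ k.succ = μ k.castSucc * wA μ k.castSucc := by
  rw [wA, wA, filter_lt_succ, Finset.prod_insert (by simp)]

lemma wB_succ (x : ℝ) (k : Fin n) :
    wB ν μ x k.succ = (μ k.succ + ν * x) * wB ν μ x k.castSucc := by
  rw [wB, wB, filter_le_succ, Finset.prod_insert]
  simp [Fin.le_def]

lemma wZ_zero (x : ℝ) : wZ lam ν μ x 0 = lam * x / (μ 0 + ν * x) := by
  rw [wZ, wA_zero, wB_zero, mul_one]

lemma wZ_succ (hμ : ∀ i, 0 < μ i) {x : ℝ} (hνx : 0 ≤ ν * x) (k : Fin n) :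
    wZ lam ν μ x k.succ = μ k.castSucc * wZ lam ν μ x k.castSucc / (μ k.succ + ν * x) := by
  have hB := (wB_pos hμ hνx k.castSucc).ne'
  have hD : μ k.succ + ν * x ≠ 0 := by have := hμ k.succ; positivity
  rw [wZ, wZ, wA_succ, wB_succ]
  field_simp

lemma sum_wZ (x : ℝ) : ∑ i, wZ lam ν μ x i = x * invariantF n lam ν μ x := by
  rw [invariantF, Finset.mul_sum, Finset.mul_sum]
  refine Finset.sum_congr rfl fun i _ => ?_
  rw [wZ, wA, wB]; ring

lemma invariantF_eq (x : ℝ) : invariantF n lam ν μ x = lam * ∑ i, wA μ i / wB ν μ x i := rfl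

lemma filter_le_eq_insert (i : Fin (n+1)) :
    Finset.univ.filter (· ≤ i) = insert i (Finset.univ.filter (· < i)) := by
  ext j
  simp only [Finset.mem_filter, Finset.mem_univ, true_and, Finset.mem_insert]
  constructor
  · intro h; rcases eq_or_lt_of_le h with h | h
    · exact Or.inl h
    · exact Or.inr h
  · rintro (rfl | h); · exact le_refl _
    · exact le_of_lt h

lemma wB_eq (x : ℝ) (i : Fin (n+1)) :
    wB ν μ x i = (μ i + ν * x) * ∏ j ∈ Finset.univ.filter (· < i), (μ j + ν * x) := by
  rw [wB, filter_le_eq_insert, Finset.prod_insert (by simp)]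

lemma F_strictAnti (hlam : 0 < lam) (hν : 0 < ν) (hμ : ∀ i, 0 < μ i) :
    StrictAntiOn (invariantF n lam ν μ) (Ici 0) := by
  intro a ha b hb hab
  rw [invariantF_eq, invariantF_eq]
  refine mul_lt_mul_of_pos_left ?_ hlam
  refine Finset.sum_lt_sum_of_nonempty Finset.univ_nonempty fun i _ => ?_
  refine div_lt_div_of_pos_left (wA_pos hμ i) (wB_pos hμ (mul_nonneg hν.le ha) i) ?_
  refine Finset.prod_lt_prod_of_nonempty (fun j _ => ?_) (fun j _ => ?_) ?_
  · have := hμ j; simp only [mem_Ici] at ha; nlinarith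
  · have := hν; nlinarith
  · exact ⟨i, by simp⟩

lemma F_zero (hμ : ∀ i, 0 < μ i) : invariantF n lam ν μ 0 = lam * ∑ i, 1 / μ i := by
  rw [invariantF_eq]
  congr 1
  refine Finset.sum_congr rfl fun i _ => ?_
  have hB : wB ν μ 0 i = μ i * wA μ i := by
    rw [wB_eq, wA]; simp
  rw [hB]
  have hA := (wA_pos hμ i).ne'
  have hm := (hμ i).ne'
  field_simp

lemma F_cont (hν : 0 < ν) (hμ : ∀ i, 0 < μ i) :
    ContinuousOn (invariantF n lam ν μ) (Ici 0) := by
  unfold invariantF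
  refine continuousOn_const.mul ?_
  refine continuousOn_finset_sum _ fun i _ => ?_
  refine ContinuousOn.div continuousOn_const ?_ fun x hx => ?_
  · exact (continuous_finset_prod _ fun j _ =>
      (continuous_const.add (continuous_const.mul continuous_id))).continuousOn
  · exact ne_of_gt (wB_pos hμ (mul_nonneg hν.le hx) i)

lemma exists_root (hlam : 0 < lam) (hν : 0 < ν) (hμ : ∀ i, 0 < μ i)
    (hover : 1 < lam * ∑ i, 1 / μ i) :
    ∃ x : ℝ, 0 < x ∧ invariantF n lam ν μ x = 1 := by
  set X : ℝ := (lam * (n + 1) + 1) / ν with hX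
  have hXpos : 0 < X := by positivity
  have hnuX : ν * X = lam * (n + 1) + 1 := by
    rw [hX]; field_simp
  have hnuXpos : 0 < ν * X := by positivity
  have hFX : invariantF n lam ν μ X < 1 := by
    have hb : ∀ i : Fin (n+1), wA μ i / wB ν μ X i ≤ 1 / (ν * X) := by
      intro i
      have hA := wA_pos hμ i
      have hlow : ν * X * wA μ i ≤ wB ν μ X i := by
        rw [wB_eq]
        refine mul_le_mul (by nlinarith [hμ i]) ?_ hA.le (by nlinarith [hμ i])
        rw [wA]
        refine Finset.prod_le_prod (fun j _ => (hμ j).le) (fun j _ => ?_)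
        nlinarith [hμ j]
      calc wA μ i / wB ν μ X i ≤ wA μ i / (ν * X * wA μ i) :=
            div_le_div_of_nonneg_left hA.le (by positivity) hlow
        _ = 1 / (ν * X) := by
            rw [eq_div_iff (by positivity)]
            field_simp
    calc invariantF n lam ν μ X = lam * ∑ i, wA μ i / wB ν μ X i := invariantF_eq X
      _ ≤ lam * ∑ _i : Fin (n+1), 1 / (ν * X) :=
          mul_le_mul_of_nonneg_left (Finset.sum_le_sum fun i _ => hb i) hlam.le
      _ = lam * ((n + 1) * (1 / (ν * X))) := by
          rw [Finset.sum_const, Finset.card_univ, Fintype.card_fin, nsmul_eq_mul]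
          push_cast; ring
      _ < 1 := by
          rw [hnuX]
          have hD : (0:ℝ) < lam * (n + 1) + 1 := by positivity
          rw [show lam * (((n:ℝ) + 1) * (1 / (lam * (n + 1) + 1)))
              = (lam * ((n:ℝ) + 1)) / (lam * (n + 1) + 1) by ring, div_lt_one hD]
          linarith
  have hF0 : 1 < invariantF n lam ν μ 0 := by rw [F_zero hμ]; exact hover
  have hsub : Icc (0:ℝ) X ⊆ Ici 0 := Icc_subset_Ici_self
  have hIVT := intermediate_value_Icc' hXpos.le (((F_cont (lam := lam) hν hμ)).mono hsub)
  obtain ⟨x, hxmem, hfx⟩ := hIVT ⟨hFX.le, hF0.le⟩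
  refine ⟨x, ?_, hfx⟩
  rcases eq_or_lt_of_le hxmem.1 with h | h
  · exfalso; rw [← h] at hfx; rw [hfx] at hF0; exact lt_irrefl 1 hF0
  · exact h

lemma wZ_eqns (hlam : 0 < lam) (hν : 0 < ν) (hμ : ∀ i, 0 < μ i) {x : ℝ} (hx : 0 < x)
    (hfx : invariantF n lam ν μ x = 1) : InvariantEqns n lam ν μ (wZ lam ν μ x) := by
  have hs : ∑ j, wZ lam ν μ x j = x := by rw [sum_wZ, hfx, mul_one]
  have hνx : 0 ≤ ν * x := (mul_pos hν hx).le
  constructor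
  · rw [hs, wZ_zero]
    have hD : μ 0 + ν * x ≠ 0 := by have := hμ 0; positivity
    have hx0 := hx.ne'
    field_simp
    have hI : (μ 0 + ν * x)⁻¹ * (μ 0 + ν * x) = 1 := inv_mul_cancel₀ hD
    linear_combination (-lam) * hI
  · intro i hi
    obtain ⟨k, rfl⟩ := (Fin.eq_zero_or_eq_succ i).resolve_left hi
    rw [hs, succ_sub_one, wZ_succ hμ hνx]
    have hD : μ k.succ + ν * x ≠ 0 := by have := hμ k.succ; positivity
    have hx0 := hx.ne'
    field_simp
    have hI : (μ k.succ + ν * x)⁻¹ * (μ k.succ + ν * x) = 1 := inv_mul_cancel₀ hD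
    linear_combination (-(μ k.castSucc * wZ lam ν μ x k.castSucc)) * hI

lemma sol_spec (hlam : 0 < lam) (hν : 0 < ν) (hμ : ∀ i, 0 < μ i)
    {z : Fin (n+1) → ℝ} (hz : ∀ i, 0 < z i) (heq : InvariantEqns n lam ν μ z) :
    z 0 = lam * (∑ j, z j) / (μ 0 + ν * ∑ j, z j) ∧
    (∀ i, i ≠ 0 → z i = μ (i - 1) * z (i - 1) / (μ i + ν * ∑ j, z j)) ∧
    (∀ i, z i = wZ lam ν μ (∑ j, z j) i) ∧
    invariantF n lam ν μ (∑ j, z j) = 1 := by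
  set s := ∑ j, z j with hsdef
  have hspos : 0 < s := Finset.sum_pos (fun i _ => hz i) Finset.univ_nonempty
  have hsne := hspos.ne'
  obtain ⟨e1, e2⟩ := heq
  have hz0 : z 0 = lam * s / (μ 0 + ν * s) := by
    have hD : (0:ℝ) < μ 0 + ν * s := add_pos (hμ 0) (mul_pos hν hspos)
    rw [eq_div_iff hD.ne']
    rw [← hsdef] at e1
    field_simp at e1
    nlinarith [e1]
  have hzi : ∀ i, i ≠ 0 → z i = μ (i - 1) * z (i - 1) / (μ i + ν * s) := by
    intro i hi
    have hD : (0:ℝ) < μ i + ν * s := add_pos (hμ i) (mul_pos hν hspos)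
    rw [eq_div_iff hD.ne']
    have h2 := e2 i hi
    rw [← hsdef] at h2
    field_simp at h2
    nlinarith [h2]
  have hw : ∀ i, z i = wZ lam ν μ s i := by
    intro i
    induction i using Fin.induction with
    | zero => rw [hz0, wZ_zero]
    | succ k ih =>
        rw [hzi k.succ (Fin.succ_ne_zero k), succ_sub_one, ih,
          wZ_succ hμ (mul_nonneg hν.le hspos.le)]
  have hf : invariantF n lam ν μ s = 1 := by
    have h1 : s = s * invariantF n lam ν μ s := by
      conv_lhs => rw [hsdef]
      rw [Finset.sum_congr rfl fun i _ => hw i]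
      exact sum_wZ s
    have h2 : s * 1 = s * invariantF n lam ν μ s := by rw [mul_one]; exact h1
    exact (mul_left_cancel₀ hsne h2).symm
  exact ⟨hz0, hzi, hw, hf⟩

end InvAux

theorem invariant_point_exists_unique (n : ℕ) (lam ν : ℝ) (hlam : 0 < lam) (hν : 0 < ν)
    (μ : Fin (n + 1) → ℝ) (hμ : ∀ i, 0 < μ i)
    (hover : 1 < lam * ∑ i, 1 / μ i) :
    (∃! z : Fin (n + 1) → ℝ, (∀ i, 0 < z i) ∧ InvariantEqns n lam ν μ z) ∧
    (∀ z : Fin (n + 1) → ℝ, (∀ i, 0 < z i) → InvariantEqns n lam ν μ z →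
      z 0 = lam * (∑ j, z j) / (μ 0 + ν * ∑ j, z j) ∧
      (∀ i, i ≠ 0 → z i = μ (i - 1) * z (i - 1) / (μ i + ν * ∑ j, z j)) ∧
      invariantF n lam ν μ (∑ j, z j) = 1) ∧
    (∃! x : ℝ, 0 < x ∧ invariantF n lam ν μ x = 1) := by
  obtain ⟨x0, hx0pos, hx0root⟩ := InvAux.exists_root hlam hν hμ hover
  have huniq : ∀ y : ℝ, 0 < y → invariantF n lam ν μ y = 1 → y = x0 := fun y hy hfy =>
    (InvAux.F_strictAnti hlam hν hμ).injOn hy.le hx0pos.le (hfy.trans hx0root.symm)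
  have hνx0 : 0 ≤ ν * x0 := (mul_pos hν hx0pos).le
  have hzpos : ∀ i, 0 < InvAux.wZ lam ν μ x0 i := InvAux.wZ_pos hlam hμ hx0pos hνx0
  have hzeq : InvariantEqns n lam ν μ (InvAux.wZ lam ν μ x0) :=
    InvAux.wZ_eqns hlam hν hμ hx0pos hx0root
  refine ⟨⟨InvAux.wZ lam ν μ x0, ⟨hzpos, hzeq⟩, ?_⟩, ?_,
    ⟨x0, ⟨hx0pos, hx0root⟩, fun y hy => huniq y hy.1 hy.2⟩⟩
  · rintro z ⟨hz, heq⟩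
    obtain ⟨_, _, hw, hf⟩ := InvAux.sol_spec hlam hν hμ hz heq
    have hspos : 0 < ∑ j, z j := Finset.sum_pos (fun i _ => hz i) Finset.univ_nonempty
    have hs := huniq _ hspos hf
    funext i
    rw [hw i, hs]
  · intro z hz heq
    obtain ⟨h1, h2, _, h4⟩ := InvAux.sol_spec hlam hν hμ hz heq
    exact ⟨h1, h2, h4⟩
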